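/- Let k be a commutative ring which is a ℚ-algebra, A an associative unital k-algebra, and λ ∈ k. The λ-weighted Hurwitz product (a ·^λ b)_n = Σ_{r+s+t=n} (n!/(r!·s!·t!))·λ^t·a_{r+t}·b_{s+t} on A^ℕ is k-bilinear, associative, and has the sequence J = (1,0,0,…) as two-sided unit; thus (A^ℕ, ·^λ, J) is an associative unital k-algebra. Moreover, if A is commutative then ·^λ is commutative. -/

import Mathlib

/-- The `lam`-weighted Hurwitz product on sequences:
`(a ·^lam b)_n = ∑_{r+s+t=n} (n!/(r!·s!·t!)) · lam^t · a_{r+t} · b_{s+t}`,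
the sum ranging over triples `(r,s,t)` with `r+s+t = n`, enumerated as
`r = x.1`, `s = y.1`, `t = y.2`. -/
noncomputable def hur {k A : Type*} [CommRing k] [Ring A] [Algebra k A]
    (lam : k) (a b : ℕ → A) : ℕ → A := fun n =>
  ∑ x ∈ Finset.HasAntidiagonal.antidiagonal n, ∑ y ∈ Finset.HasAntidiagonal.antidiagonal x.2,
    (n.factorial / (x.1.factorial * y.1.factorial * y.2.factorial)) •
      (lam ^ y.2 • (a (x.1 + y.2) * b (y.1 + y.2)))

/-- The sequence `J = (1,0,0,…)`, the unit for the weighted Hurwitz products. -/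
def Jseq (A : Type*) [One A] [Zero A] : ℕ → A := fun n => if n = 0 then 1 else 0

set_option maxSynthPendingDepth 3

namespace HurAux

open Finset Polynomial Nat

/-! ### The combinatorial coefficient `D` -/

def D (n i j : ℕ) : ℕ := if n ≤ i + j then n.choose j * j.choose (i + j - n) else 0

lemma D_of_le {n i j : ℕ} (h : n ≤ i + j) :
    D n i j = n.choose j * j.choose (i + j - n) := if_pos h

lemma D_of_not {n i j : ℕ} (h : ¬ n ≤ i + j) : D n i j = 0 := if_neg h

lemma D_ne_zero {n i j : ℕ} (h : D n i j ≠ 0) : n ≤ i + j := by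
  by_contra hc; exact h (D_of_not hc)

lemma D_eq_zero_left {n i j : ℕ} (h : n < i) : D n i j = 0 := by
  unfold D; split
  · rw [Nat.choose_eq_zero_of_lt (show j < i + j - n by omega), mul_zero]
  · rfl

lemma D_eq_zero_right {n i j : ℕ} (h : n < j) : D n i j = 0 := by
  unfold D; split
  · rw [Nat.choose_eq_zero_of_lt (show n < j from h), zero_mul]
  · rfl

lemma D_mul_fact {n i j : ℕ} (h : n ≤ i + j) (hi : i ≤ n) (hj : j ≤ n) :
    D n i j * ((i + j - n)! * ((n - i)! * (n - j)!)) = n ! := by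
  rw [D_of_le h]
  have e1 : j - (i + j - n) = n - i := by omega
  have h1 := Nat.choose_mul_factorial_mul_factorial (show i + j - n ≤ j by omega)
  rw [e1] at h1
  have h2 := Nat.choose_mul_factorial_mul_factorial hj
  calc n.choose j * j.choose (i + j - n) * ((i + j - n)! * ((n - i)! * (n - j)!))
      = n.choose j * (j.choose (i + j - n) * (i + j - n)! * (n - i)!) * (n - j)! := by ring
    _ = n.choose j * j ! * (n - j)! := by rw [h1]
    _ = n ! := h2

lemma D_symm (n i j : ℕ) : D n i j = D n j i := by
  by_cases h : n ≤ i + j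
  · by_cases hi : i ≤ n
    · by_cases hj : j ≤ n
      · have h' : n ≤ j + i := by omega
        have f1 := D_mul_fact h hi hj
        have f2 := D_mul_fact h' hj hi
        have e : (j + i - n)! * ((n - j)! * (n - i)!) = (i + j - n)! * ((n - i)! * (n - j)!) := by
          rw [show j + i = i + j by ring]; ring
        rw [e] at f2
        exact Nat.eq_of_mul_eq_mul_right (by positivity) (f1.trans f2.symm)
      · rw [D_eq_zero_right (by omega), D_eq_zero_left (by omega)]
    · rw [D_eq_zero_left (by omega), D_eq_zero_right (by omega)]
  · rw [D_of_not h, D_of_not (by omega)]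

/-! ### Polynomial lemmas -/

variable {R : Type*} [CommSemiring R]

lemma coeff_natCast_mul (d : ℕ) (p : R[X]) (i : ℕ) :
    ((d : R[X]) * p).coeff i = (d : R) * p.coeff i := by
  rw [← map_natCast (C : R →+* R[X]) d, coeff_C_mul]

lemma coeff_mul_natCast (p : R[X]) (d i : ℕ) :
    (p * (d : R[X])).coeff i = p.coeff i * d := by
  rw [mul_comm, coeff_natCast_mul, mul_comm]

lemma cxp (s t i : ℕ) :
    ((X : R[X]) ^ s * (1 + X) ^ t).coeff i
      = if s ≤ i then (t.choose (i - s) : R) else 0 := by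
  rw [mul_comm, Polynomial.coeff_mul_X_pow', Polynomial.coeff_one_add_X_pow]

lemma G (u : R) (n l : ℕ) :
    ((C u + X * (1 + C u)) ^ n).coeff l
      = (n.choose l : R) * (u ^ (n - l) * (1 + u) ^ l) := by
  rw [add_pow, finset_sum_coeff]
  have hterm : ∀ p ∈ range (n + 1),
      ((C u) ^ p * (X * (1 + C u)) ^ (n - p) * ((n.choose p : ℕ) : R[X])).coeff l
        = if l = n - p then (n.choose p : R) * (u ^ p * (1 + u) ^ (n - p)) else 0 := by
    intro p _
    have key : (C u) ^ p * (X * (1 + C u)) ^ (n - p) * ((n.choose p : ℕ) : R[X])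
        = C ((n.choose p : R) * (u ^ p * (1 + u) ^ (n - p))) * X ^ (n - p) := by
      rw [map_mul, map_mul, map_pow, map_pow, map_natCast, map_add, map_one, mul_pow]
      ring
    rw [key, coeff_C_mul, coeff_X_pow, mul_ite, mul_one, mul_zero]
  rw [Finset.sum_congr rfl hterm]
  rcases le_or_gt l n with hl | hl
  · rw [Finset.sum_eq_single (n - l)]
    · rw [if_pos (by omega), Nat.choose_symm hl, show n - (n - l) = l by omega]
    · intro p hp hne
      rw [if_neg (by simp at hp; omega)]
    · intro h; exact absurd (Finset.mem_range.2 (by omega)) h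
  · rw [Finset.sum_eq_zero, Nat.choose_eq_zero_of_lt hl]
    · simp
    · intro p hp
      rw [if_neg (by simp at hp; omega)]

lemma H (u : R) (n l : ℕ) :
    ∑ m ∈ range (n + 1), (D n m l : R) * u ^ m
      = (n.choose l : R) * (u ^ (n - l) * (1 + u) ^ l) := by
  rcases le_or_gt l n with hl | hl
  · have expand : (n.choose l : R) * (u ^ (n - l) * (1 + u) ^ l)
        = ∑ d ∈ range (l + 1), (n.choose l * l.choose d : R) * u ^ (n - l + d) := by
      rw [add_comm (1 : R) u, add_pow, Finset.mul_sum, Finset.mul_sum]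
      refine Finset.sum_congr rfl fun d hd => ?_
      simp only [one_pow, pow_add]
      push_cast
      ring
    rw [expand]
    rw [← Finset.sum_filter_of_ne (p := fun m => n - l ≤ m)
      (fun m _ h => by
        by_contra hc
        exact h (by rw [D_of_not (by omega), Nat.cast_zero, zero_mul]))]
    refine Finset.sum_nbij' (fun m => m - (n - l)) (fun d => n - l + d) ?_ ?_ ?_ ?_ ?_
    · intro m hm
      simp only [Finset.mem_filter, Finset.mem_range] at hm ⊢
      omega
    · intro d hd
      simp only [Finset.mem_filter, Finset.mem_range] at hd ⊢
      omega
    · intro m hm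
      simp only [Finset.mem_filter, Finset.mem_range] at hm
      omega
    · intro d hd
      simp only [Finset.mem_range] at hd
      omega
    · intro m hm
      simp only [Finset.mem_filter, Finset.mem_range] at hm
      rw [D_of_le (by omega), show n - l + (m - (n - l)) = m by omega,
        show m - (n - l) = m + l - n by omega]
      push_cast
      ring
  · rw [Nat.choose_eq_zero_of_lt hl, Nat.cast_zero, zero_mul]
    refine Finset.sum_eq_zero fun m hm => ?_
    rw [D_of_le (by omega), Nat.choose_eq_zero_of_lt hl]
    simp

noncomputable def w : Polynomial (Polynomial ℕ) := C X + X * (1 + C X)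

lemma coeff_w (n i j : ℕ) : ((w ^ n).coeff j).coeff i = D n i j := by
  rw [w, G, coeff_natCast_mul, cxp]
  rcases le_or_gt j n with hj | hj
  · by_cases h : n ≤ i + j
    · rw [if_pos (by omega), D_of_le h, show i - (n - j) = i + j - n by omega]
      push_cast; ring
    · rw [if_neg (by omega), D_of_not h, mul_zero]
  · have hz : n.choose j = 0 := Nat.choose_eq_zero_of_lt hj
    rw [D_of_le (by omega), hz]
    simp

noncomputable def W : Polynomial (Polynomial (Polynomial ℕ)) := C w + X * (1 + C w)

lemma way1 (n i j l : ℕ) :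
    (((W ^ n).coeff l).coeff j).coeff i = ∑ m ∈ range (n + 1), D n m l * D m i j := by
  rw [W, G, ← H, finset_sum_coeff, finset_sum_coeff]
  refine Finset.sum_congr rfl fun m _ => ?_
  rw [coeff_natCast_mul, coeff_natCast_mul, coeff_w]
  simp

noncomputable def v : Polynomial (Polynomial (Polynomial ℕ)) := C X + X * (1 + C X)
noncomputable def u2 : Polynomial (Polynomial (Polynomial ℕ)) := C (C X)

lemma W_eq : W = u2 + v * (1 + u2) := by
  rw [W, w, v, u2]
  simp only [map_add, map_mul, map_one]
  ring

lemma way2 (n i j l : ℕ) :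
    (((W ^ n).coeff l).coeff j).coeff i = ∑ m ∈ range (n + 1), D n i m * D m j l := by
  calc (((W ^ n).coeff l).coeff j).coeff i
      = ∑ p ∈ range (n + 1), n.choose p * ((n - p).choose l *
          ((if n - p - l ≤ j then l.choose (j - (n - p - l)) else 0) *
           (if p ≤ i then (n - p).choose (i - p) else 0))) := by
        rw [W_eq, add_pow, finset_sum_coeff, finset_sum_coeff, finset_sum_coeff]
        refine Finset.sum_congr rfl fun p _ => ?_
        have e1 : u2 ^ p * (v * (1 + u2)) ^ (n - p)
              * ((n.choose p : ℕ) : Polynomial (Polynomial (Polynomial ℕ)))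
            = ((n.choose p : ℕ) : Polynomial (Polynomial (Polynomial ℕ)))
              * (C (C ((X : Polynomial ℕ) ^ p * (1 + X) ^ (n - p))) * v ^ (n - p)) := by
          rw [u2, mul_pow, map_mul, map_mul, map_pow, map_pow, map_pow, map_pow,
            map_add, map_add, map_one, map_one]
          ring
        rw [e1, coeff_natCast_mul, coeff_C_mul, v, G]
        rw [coeff_natCast_mul]
        have e2 : (C ((X : Polynomial ℕ) ^ p * (1 + X) ^ (n - p)) :
              Polynomial (Polynomial ℕ))
              * ((((n - p).choose l : ℕ) : Polynomial (Polynomial ℕ))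
                  * ((X : Polynomial (Polynomial ℕ)) ^ (n - p - l) * (1 + X) ^ l))
            = (((n - p).choose l : ℕ) : Polynomial (Polynomial ℕ))
              * (C ((X : Polynomial ℕ) ^ p * (1 + X) ^ (n - p))
                  * ((X : Polynomial (Polynomial ℕ)) ^ (n - p - l) * (1 + X) ^ l)) := by
          ring
        rw [e2, coeff_natCast_mul, coeff_natCast_mul, coeff_C_mul, cxp]
        split_ifs with hg hp
        · rw [coeff_natCast_mul, coeff_mul_natCast, cxp, if_pos hp]
          simp only [Nat.cast_id]
          ring
        · rw [coeff_natCast_mul, coeff_mul_natCast, cxp, if_neg hp]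
          simp
        · simp
        · simp
    _ = ∑ m ∈ range (n + 1), D n i m * D m j l := by
        refine Finset.sum_nbij' (fun p => n - p) (fun m => n - m) ?_ ?_ ?_ ?_ ?_
        · intro p hp; simp only [mem_range] at hp ⊢; omega
        · intro m hm; simp only [mem_range] at hm ⊢; omega
        · intro p hp; simp only [mem_range] at hp; omega
        · intro m hm; simp only [mem_range] at hm; omega
        · intro p hp
          simp only [mem_range] at hp
          by_cases h1 : p ≤ i
          · by_cases h2 : l ≤ n - p
            · by_cases h3 : n - p - l ≤ j
              · rw [if_pos h3, if_pos h1,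
                  D_of_le (show n ≤ i + (n - p) by omega),
                  D_of_le (show n - p ≤ j + l by omega),
                  show i + (n - p) - n = i - p by omega,
                  show j + l - (n - p) = j - (n - p - l) by omega,
                  Nat.choose_symm (show p ≤ n by omega)]
                ring
              · rw [if_neg h3, D_of_not (show ¬ (n - p ≤ j + l) by omega)]
                simp
            · have hz : (n - p).choose l = 0 := Nat.choose_eq_zero_of_lt (by omega)
              rw [hz]
              have hD : D (n - p) j l = 0 := by
                unfold D
                split
                · rw [show (n - p).choose l = 0 from hz, zero_mul]
                · rfl
              rw [hD]
              simp
          · rw [if_neg h1, D_of_not (show ¬ (n ≤ i + (n - p)) by omega)]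
            simp

lemma key (n i j l : ℕ) :
    ∑ m ∈ range (n + 1), D n m l * D m i j
      = ∑ m ∈ range (n + 1), D n i m * D m j l :=
  (way1 n i j l).symm.trans (way2 n i j l)

/-! ### `hur` via `D` -/

/-- The multinomial coefficient in `hur` equals `D`. -/
lemma multi_eq_D {n r s t : ℕ} (h : r + (s + t) = n) :
    n ! / (r ! * s ! * t !) = D n (r + t) (s + t) := by
  have hd : D n (r + t) (s + t) = n.choose (s + t) * (s + t).choose t := by
    rw [D_of_le (by omega), show r + t + (s + t) - n = t by omega]
  rw [hd]
  have hdvd : r ! * s ! * t ! ∣ n ! := by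
    have h1 : r ! * s ! ∣ (r + s)! := Nat.factorial_mul_factorial_dvd_factorial_add r s
    have h2 : (r + s)! * t ! ∣ (r + s + t)! := Nat.factorial_mul_factorial_dvd_factorial_add _ t
    calc r ! * s ! * t ! ∣ (r + s)! * t ! := mul_dvd_mul_right h1 _
      _ ∣ (r + s + t)! := h2
      _ = n ! := by rw [show r + s + t = n by omega]
  refine Nat.div_eq_of_eq_mul_left (by positivity) ?_
  have h1 : (s + t).choose t * t ! * s ! = (s + t)! := by
    have := Nat.choose_mul_factorial_mul_factorial (show t ≤ s + t by omega)
    rwa [show s + t - t = s by omega] at this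
  have h2 : n.choose (s + t) * (s + t)! * r ! = n ! := by
    have := Nat.choose_mul_factorial_mul_factorial (show s + t ≤ n by omega)
    rwa [show n - (s + t) = r by omega] at this
  calc n ! = n.choose (s + t) * (s + t)! * r ! := h2.symm
    _ = n.choose (s + t) * ((s + t).choose t * t ! * s !) * r ! := by rw [h1]
    _ = n.choose (s + t) * (s + t).choose t * (r ! * s ! * t !) := by ring

variable {k A : Type*} [CommRing k] [Ring A] [Algebra k A]

lemma hur_eq (lam : k) (a b : ℕ → A) (n : ℕ) :
    hur lam a b n = ∑ i ∈ range (n + 1), ∑ j ∈ range (n + 1),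
      D n i j • (lam ^ (i + j - n) • (a i * b j)) := by
  rw [hur]
  rw [Finset.sum_sigma', ← Finset.sum_product']
  rw [← Finset.sum_filter_of_ne (p := fun p : ℕ × ℕ => n ≤ p.1 + p.2)
    (fun p _ h => by
      by_contra hc
      exact h (by rw [D_of_not hc, zero_smul]))]
  refine Finset.sum_nbij' (fun q => (q.1.1 + q.2.2, q.2.1 + q.2.2))
    (fun p => ⟨(n - p.2, p.2), (n - p.1, p.1 + p.2 - n)⟩) ?_ ?_ ?_ ?_ ?_
  · rintro ⟨⟨r, m⟩, s, t⟩ hq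
    simp only [Finset.mem_sigma, Finset.HasAntidiagonal.mem_antidiagonal] at hq
    simp only [Finset.mem_filter, Finset.mem_product, Finset.mem_range]
    omega
  · rintro ⟨i, j⟩ hp
    simp only [Finset.mem_filter, Finset.mem_product, Finset.mem_range] at hp
    simp only [Finset.mem_sigma, Finset.HasAntidiagonal.mem_antidiagonal]
    omega
  · rintro ⟨⟨r, m⟩, s, t⟩ hq
    simp only [Finset.mem_sigma, Finset.HasAntidiagonal.mem_antidiagonal] at hq
    apply Sigma.ext
    · dsimp only
      simp only [Prod.mk.injEq]
      constructor <;> omega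
    · dsimp only
      refine heq_of_eq ?_
      simp only [Prod.mk.injEq]
      constructor <;> omega
  · rintro ⟨i, j⟩ hp
    simp only [Finset.mem_filter, Finset.mem_product, Finset.mem_range] at hp
    simp only [Prod.mk.injEq]
    constructor <;> omega
  · rintro ⟨⟨r, m⟩, s, t⟩ hq
    simp only [Finset.mem_sigma, Finset.HasAntidiagonal.mem_antidiagonal] at hq
    dsimp only
    rw [multi_eq_D (by omega), show r + t + (s + t) - n = t by omega]

lemma hur_eq' (lam : k) (a b : ℕ → A) {m n : ℕ} (hmn : m ≤ n) :
    hur lam a b m = ∑ i ∈ range (n + 1), ∑ j ∈ range (n + 1),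
      D m i j • (lam ^ (i + j - m) • (a i * b j)) := by
  rw [hur_eq]
  have hsub : range (m + 1) ⊆ range (n + 1) := Finset.range_subset_range.2 (by omega)
  rw [Finset.sum_subset hsub (fun i _ hi => Finset.sum_eq_zero fun j _ => by
    rw [D_eq_zero_left (by simp at hi; omega), zero_smul])]
  refine Finset.sum_congr rfl fun i _ => ?_
  rw [Finset.sum_subset hsub (fun j _ hj => by
    rw [D_eq_zero_right (by simp at hj; omega), zero_smul])]

/-! ### sum permutation helpers -/

lemma sum_rot3 {M : Type*} [AddCommMonoid M] (s : Finset ℕ) (f : ℕ → ℕ → ℕ → M) :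
    ∑ m ∈ s, ∑ i ∈ s, ∑ j ∈ s, f m i j = ∑ i ∈ s, ∑ j ∈ s, ∑ m ∈ s, f m i j := by
  rw [Finset.sum_comm]
  exact Finset.sum_congr rfl fun i _ => Finset.sum_comm

lemma sum_rot4 {M : Type*} [AddCommMonoid M] (s : Finset ℕ) (f : ℕ → ℕ → ℕ → ℕ → M) :
    ∑ m ∈ s, ∑ l ∈ s, ∑ i ∈ s, ∑ j ∈ s, f m l i j
      = ∑ l ∈ s, ∑ i ∈ s, ∑ j ∈ s, ∑ m ∈ s, f m l i j := by
  rw [Finset.sum_comm]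
  refine Finset.sum_congr rfl fun l _ => ?_
  rw [Finset.sum_comm]
  refine Finset.sum_congr rfl fun i _ => ?_
  rw [Finset.sum_comm]

/-! ### Associativity -/

lemma hur_assoc (lam : k) (a b c : ℕ → A) :
    hur lam (hur lam a b) c = hur lam a (hur lam b c) := by
  funext n
  rw [hur_eq, hur_eq]
  have hL : ∀ m ∈ range (n + 1), ∀ l ∈ range (n + 1),
      D n m l • (lam ^ (m + l - n) • (hur lam a b m * c l))
        = ∑ i ∈ range (n + 1), ∑ j ∈ range (n + 1),
            (D n m l * D m i j) • (lam ^ (i + j + l - n) • (a i * b j * c l)) := by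
    intro m hm l hl
    simp only [mem_range] at hm
    rw [hur_eq' lam a b (show m ≤ n by omega), Finset.sum_mul, Finset.smul_sum, Finset.smul_sum]
    refine Finset.sum_congr rfl fun i _ => ?_
    rw [Finset.sum_mul, Finset.smul_sum, Finset.smul_sum]
    refine Finset.sum_congr rfl fun j _ => ?_
    rw [smul_mul_assoc, smul_mul_assoc]
    rw [smul_comm (lam ^ (m + l - n)) (D m i j)]
    rw [← mul_smul]
    by_cases hz : D n m l * D m i j = 0
    · rw [hz, zero_smul, zero_smul]
    · have g1 : n ≤ m + l := D_ne_zero fun h => hz (by rw [h, zero_mul])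
      have g2 : m ≤ i + j := D_ne_zero fun h => hz (by rw [h, mul_zero])
      rw [smul_smul, ← pow_add, show m + l - n + (i + j - m) = i + j + l - n by omega]
  have hR : ∀ i ∈ range (n + 1), ∀ m ∈ range (n + 1),
      D n i m • (lam ^ (i + m - n) • (a i * hur lam b c m))
        = ∑ j ∈ range (n + 1), ∑ l ∈ range (n + 1),
            (D n i m * D m j l) • (lam ^ (i + j + l - n) • (a i * (b j * c l))) := by
    intro i hi m hm
    simp only [mem_range] at hm
    rw [hur_eq' lam b c (show m ≤ n by omega), Finset.mul_sum, Finset.smul_sum, Finset.smul_sum]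
    refine Finset.sum_congr rfl fun j _ => ?_
    rw [Finset.mul_sum, Finset.smul_sum, Finset.smul_sum]
    refine Finset.sum_congr rfl fun l _ => ?_
    rw [mul_smul_comm, mul_smul_comm]
    rw [smul_comm (lam ^ (i + m - n)) (D m j l)]
    rw [← mul_smul]
    by_cases hz : D n i m * D m j l = 0
    · rw [hz, zero_smul, zero_smul]
    · have g1 : n ≤ i + m := D_ne_zero fun h => hz (by rw [h, zero_mul])
      have g2 : m ≤ j + l := D_ne_zero fun h => hz (by rw [h, mul_zero])
      rw [smul_smul, ← pow_add, show i + m - n + (j + l - m) = i + j + l - n by omega]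
  calc ∑ m ∈ range (n + 1), ∑ l ∈ range (n + 1),
        D n m l • (lam ^ (m + l - n) • (hur lam a b m * c l))
      = ∑ m ∈ range (n + 1), ∑ l ∈ range (n + 1), ∑ i ∈ range (n + 1), ∑ j ∈ range (n + 1),
          (D n m l * D m i j) • (lam ^ (i + j + l - n) • (a i * b j * c l)) := by
        refine Finset.sum_congr rfl fun m hm => Finset.sum_congr rfl fun l hl => ?_
        exact hL m hm l hl
    _ = ∑ l ∈ range (n + 1), ∑ i ∈ range (n + 1), ∑ j ∈ range (n + 1), ∑ m ∈ range (n + 1),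
          (D n m l * D m i j) • (lam ^ (i + j + l - n) • (a i * b j * c l)) :=
        sum_rot4 _ _
    _ = ∑ i ∈ range (n + 1), ∑ j ∈ range (n + 1), ∑ l ∈ range (n + 1), ∑ m ∈ range (n + 1),
          (D n m l * D m i j) • (lam ^ (i + j + l - n) • (a i * b j * c l)) :=
        sum_rot3 _ _
    _ = ∑ i ∈ range (n + 1), ∑ j ∈ range (n + 1), ∑ l ∈ range (n + 1), ∑ m ∈ range (n + 1),
          (D n i m * D m j l) • (lam ^ (i + j + l - n) • (a i * (b j * c l))) := by
        refine Finset.sum_congr rfl fun i _ => Finset.sum_congr rfl fun j _ =>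
          Finset.sum_congr rfl fun l _ => ?_
        rw [← Finset.sum_smul, ← Finset.sum_smul, key, mul_assoc]
    _ = ∑ i ∈ range (n + 1), ∑ m ∈ range (n + 1), ∑ j ∈ range (n + 1), ∑ l ∈ range (n + 1),
          (D n i m * D m j l) • (lam ^ (i + j + l - n) • (a i * (b j * c l))) := by
        refine Finset.sum_congr rfl fun i _ => ?_
        exact (sum_rot3 _ _).symm
    _ = ∑ i ∈ range (n + 1), ∑ m ∈ range (n + 1),
          D n i m • (lam ^ (i + m - n) • (a i * hur lam b c m)) := by
        refine Finset.sum_congr rfl fun i hi => Finset.sum_congr rfl fun m hm => ?_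
        exact (hR i hi m hm).symm

/-! ### Units -/

lemma hur_one_left (lam : k) (a : ℕ → A) : hur lam (Jseq A) a = a := by
  funext n
  rw [hur_eq]
  rw [Finset.sum_eq_single 0]
  · rw [Finset.sum_eq_single n]
    · rw [show D n 0 n = 1 by rw [D_of_le (by omega)]; simp [Jseq],
        show 0 + n - n = 0 by omega, pow_zero, one_smul, one_smul,
        show Jseq A 0 = 1 from rfl, one_mul]
    · intro j hj hne
      simp only [mem_range] at hj
      rw [D_of_not (by omega), zero_smul]
    · intro h
      exact absurd (Finset.mem_range.2 (by omega)) h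
  · intro i hi hne
    refine Finset.sum_eq_zero fun j _ => ?_
    rw [show Jseq A i = 0 from if_neg hne, zero_mul, smul_zero, smul_zero]
  · intro h
    exact absurd (Finset.mem_range.2 (by omega)) h

lemma hur_one_right (lam : k) (a : ℕ → A) : hur lam a (Jseq A) = a := by
  funext n
  rw [hur_eq]
  have inner : ∀ i ∈ range (n + 1),
      ∑ j ∈ range (n + 1), D n i j • (lam ^ (i + j - n) • (a i * Jseq A j))
        = if i = n then a n else 0 := by
    intro i hi
    simp only [mem_range] at hi
    rw [Finset.sum_eq_single 0]
    · split_ifs with hin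
      · rw [hin]
        rw [show D n n 0 = 1 by rw [D_of_le (by omega)]; simp,
          show n + 0 - n = 0 by omega, pow_zero, one_smul, one_smul,
          show Jseq A 0 = 1 from rfl, mul_one]
      · rw [D_of_not (by omega), zero_smul]
    · intro j hj hne
      rw [show Jseq A j = 0 from if_neg hne, mul_zero, smul_zero, smul_zero]
    · intro h
      exact absurd (Finset.mem_range.2 (by omega)) h
  rw [Finset.sum_congr rfl inner]
  simp

/-! ### Linearity -/

lemma hur_add_left (lam : k) (a b c : ℕ → A) :
    hur lam (a + b) c = hur lam a c + hur lam b c := by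
  funext n
  simp only [hur, Pi.add_apply, add_mul, smul_add, Finset.sum_add_distrib]

lemma hur_add_right (lam : k) (a b c : ℕ → A) :
    hur lam a (b + c) = hur lam a b + hur lam a c := by
  funext n
  simp only [hur, Pi.add_apply, mul_add, smul_add, Finset.sum_add_distrib]

lemma hur_smul_left (lam : k) (r : k) (a b : ℕ → A) :
    hur lam (r • a) b = r • hur lam a b := by
  funext n
  simp only [hur, Pi.smul_apply, smul_mul_assoc, Finset.smul_sum]
  refine Finset.sum_congr rfl fun x _ => Finset.sum_congr rfl fun y _ => ?_
  rw [smul_comm (lam ^ y.2) r, smul_comm _ r]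

lemma hur_smul_right (lam : k) (r : k) (a b : ℕ → A) :
    hur lam a (r • b) = r • hur lam a b := by
  funext n
  simp only [hur, Pi.smul_apply, mul_smul_comm, Finset.smul_sum]
  refine Finset.sum_congr rfl fun x _ => Finset.sum_congr rfl fun y _ => ?_
  rw [smul_comm (lam ^ y.2) r, smul_comm _ r]

/-! ### Commutativity -/

lemma hur_comm (lam : k) (hc : ∀ x y : A, x * y = y * x) (a b : ℕ → A) :
    hur lam a b = hur lam b a := by
  funext n
  rw [hur_eq, hur_eq, Finset.sum_comm]
  refine Finset.sum_congr rfl fun j _ => Finset.sum_congr rfl fun i _ => ?_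
  rw [D_symm n j i, show j + i = i + j by omega, hc (b j) (a i)]

end HurAux

/-- The `λ`-weighted Hurwitz product on `A^ℕ` is `k`-bilinear, associative,
and has `J = (1,0,0,…)` as a two-sided unit; moreover if `A` is commutative then so is it. -/
theorem stmt3 {k A : Type*} [CommRing k] [Algebra ℚ k] [Ring A] [Algebra k A] (lam : k) :
    (∀ a b c : ℕ → A, hur lam (a + b) c = hur lam a c + hur lam b c) ∧
    (∀ a b c : ℕ → A, hur lam a (b + c) = hur lam a b + hur lam a c) ∧
    (∀ (r : k) (a b : ℕ → A), hur lam (r • a) b = r • hur lam a b) ∧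
    (∀ (r : k) (a b : ℕ → A), hur lam a (r • b) = r • hur lam a b) ∧
    (∀ a b c : ℕ → A, hur lam (hur lam a b) c = hur lam a (hur lam b c)) ∧
    (∀ a : ℕ → A, hur lam (Jseq A) a = a) ∧
    (∀ a : ℕ → A, hur lam a (Jseq A) = a) ∧
    ((∀ x y : A, x * y = y * x) → ∀ a b : ℕ → A, hur lam a b = hur lam b a) :=
  ⟨fun a b c => HurAux.hur_add_left lam a b c,
   fun a b c => HurAux.hur_add_right lam a b c,
   fun r a b => HurAux.hur_smul_left lam r a b,
   fun r a b => HurAux.hur_smul_right lam r a b,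
   fun a b c => HurAux.hur_assoc lam a b c,
   fun a => HurAux.hur_one_left lam a,
   fun a => HurAux.hur_one_right lam a,
   fun hc a b => HurAux.hur_comm lam hc a b⟩
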